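/- Let χ : ℝ → ℂ be continuously differentiable, let b : ℝ → ℝ be continuously differentiable with b(r) > 0 for all r, and let γ : ℝ² → ℝ be continuously differentiable. Define a₀ : ℝ² → ℂ by a₀(t,r) = χ(r+t) · b(r)^{-1/4} · exp( −(1/2) ∫₀^t γ(τ, r+t−τ) dτ ). Then a₀ is differentiable and satisfies the transport equation ∂ₜ a₀(t,r) − ∂ᵣ a₀(t,r) + ( γ(t,r)/2 − b'(r)/(4 b(r)) ) a₀(t,r) = 0 for all (t,r) ∈ ℝ². -/

import Mathlib

open MeasureTheory

/-- Differentiability in the parameter of `s ↦ ∫ τ in 0..t₀, γ (τ, s - τ)`. -/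
lemma mgt_param_deriv (γ : ℝ × ℝ → ℝ) (hγ : ContDiff ℝ 1 γ) (t₀ s₀ : ℝ) :
    ∃ k : ℝ, HasDerivAt (fun s => ∫ τ in (0:ℝ)..t₀, γ (τ, s - τ)) k s₀ := by
  have hγc : Continuous γ := hγ.continuous
  have hfd : Continuous (fderiv ℝ γ) := hγ.continuous_fderiv one_ne_zero
  have hγd : Differentiable ℝ γ := hγ.differentiable one_ne_zero
  -- compact set containing all relevant points
  set K : Set (ℝ × ℝ) := Set.Icc (-|t₀|) |t₀| ×ˢ Metric.closedBall s₀ (1 + |t₀|) with hK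
  have hKc : IsCompact K := isCompact_Icc.prod (isCompact_closedBall _ _)
  obtain ⟨C, hC⟩ := hKc.exists_bound_of_continuousOn hfd.continuousOn
  have htau : ∀ τ ∈ Set.uIoc (0:ℝ) t₀, τ ∈ Set.Icc (-|t₀|) |t₀| := by
    intro τ hτ
    rw [Set.mem_uIoc] at hτ
    constructor <;> rcases hτ with ⟨h1, h2⟩ | ⟨h1, h2⟩ <;>
      nlinarith [le_abs_self t₀, neg_abs_le t₀]
  have hinner : ∀ s : ℝ, Continuous fun τ : ℝ => ((τ, s - τ) : ℝ × ℝ) := by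
    intro s; exact continuous_id.prodMk (continuous_const.sub continuous_id)
  refine ⟨∫ τ in (0:ℝ)..t₀, (fderiv ℝ γ (τ, s₀ - τ)) (0, 1), ?_⟩
  refine (intervalIntegral.hasDerivAt_integral_of_dominated_loc_of_deriv_le
    (𝕜 := ℝ) (μ := volume) (F := fun s τ => γ (τ, s - τ))
    (F' := fun s τ => (fderiv ℝ γ (τ, s - τ)) (0, 1))
    (bound := fun _ => C) (Metric.ball_mem_nhds s₀ one_pos) ?_ ?_ ?_ ?_ ?_ ?_).2
  · exact Filter.Eventually.of_forall fun s =>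
      ((hγc.comp (hinner s)).aestronglyMeasurable)
  · exact (hγc.comp (hinner s₀)).intervalIntegrable _ _
  · exact (((hfd.comp (hinner s₀)).clm_apply continuous_const).aestronglyMeasurable)
  · refine Filter.Eventually.of_forall fun τ hτ s hs => ?_
    have hmem : ((τ, s - τ) : ℝ × ℝ) ∈ K := by
      refine Set.mk_mem_prod (htau τ hτ) ?_
      rw [Metric.mem_closedBall, Real.dist_eq]
      have h1 : |s - s₀| ≤ 1 := by
        rw [Metric.mem_ball, Real.dist_eq] at hs; linarith [le_of_lt hs]
      have h2 : |τ| ≤ |t₀| := by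
        have := htau τ hτ; rw [Set.mem_Icc] at this; rw [abs_le]; exact this
      calc |s - τ - s₀| = |(s - s₀) - τ| := by ring_nf
        _ ≤ |s - s₀| + |τ| := abs_sub _ _
        _ ≤ 1 + |t₀| := add_le_add h1 h2
    calc ‖(fderiv ℝ γ (τ, s - τ)) (0, 1)‖
        ≤ ‖fderiv ℝ γ (τ, s - τ)‖ * ‖((0:ℝ), (1:ℝ))‖ :=
          (fderiv ℝ γ (τ, s - τ)).le_opNorm _
      _ = ‖fderiv ℝ γ (τ, s - τ)‖ := by
          simp [Prod.norm_def]
      _ ≤ C := hC _ hmem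
  · exact intervalIntegrable_const
  · refine Filter.Eventually.of_forall fun τ _ s _ => ?_
    have hg : HasDerivAt (fun s' : ℝ => ((τ, s' - τ) : ℝ × ℝ)) ((0 : ℝ), (1 : ℝ)) s :=
      (hasDerivAt_const s τ).prodMk ((hasDerivAt_id s).sub_const τ)
    exact (hγd (τ, s - τ)).hasFDerivAt.comp_hasDerivAt s hg

/-- Joint differentiability of `(t,s) ↦ ∫ τ in 0..t, γ (τ, s - τ)`, with explicit
`t`-partial derivative `γ (t, s - t)`. -/
lemma mgt_v_hasFDerivAt (γ : ℝ × ℝ → ℝ) (hγ : ContDiff ℝ 1 γ) (t₀ s₀ : ℝ) :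
    ∃ k : ℝ, HasFDerivAt (fun p : ℝ × ℝ => ∫ τ in (0:ℝ)..p.1, γ (τ, p.2 - τ))
      (k • ContinuousLinearMap.snd ℝ ℝ ℝ
        + γ (t₀, s₀ - t₀) • ContinuousLinearMap.fst ℝ ℝ ℝ) (t₀, s₀) := by
  have hγc : Continuous γ := hγ.continuous
  have hinner : ∀ s : ℝ, Continuous fun τ : ℝ => γ (τ, s - τ) := fun s =>
    hγc.comp (continuous_id.prodMk (continuous_const.sub continuous_id))
  obtain ⟨k, hk⟩ := mgt_param_deriv γ hγ t₀ s₀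
  refine ⟨k, ?_⟩
  have hsplit : (fun p : ℝ × ℝ => ∫ τ in (0:ℝ)..p.1, γ (τ, p.2 - τ))
      = fun p : ℝ × ℝ => (∫ τ in (0:ℝ)..t₀, γ (τ, p.2 - τ))
          + ∫ τ in t₀..p.1, γ (τ, p.2 - τ) := by
    funext p
    exact (intervalIntegral.integral_add_adjacent_intervals
      ((hinner p.2).intervalIntegrable _ _) ((hinner p.2).intervalIntegrable _ _)).symm
  rw [hsplit]
  have h1 : HasFDerivAt (fun p : ℝ × ℝ => ∫ τ in (0:ℝ)..t₀, γ (τ, p.2 - τ))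
      (k • ContinuousLinearMap.snd ℝ ℝ ℝ) (t₀, s₀) :=
    by have := hk.comp_hasFDerivAt (t₀, s₀)
         (hasFDerivAt_snd : HasFDerivAt Prod.snd (ContinuousLinearMap.snd ℝ ℝ ℝ) (t₀, s₀)); exact this
  have h2 : HasFDerivAt (fun p : ℝ × ℝ => ∫ τ in t₀..p.1, γ (τ, p.2 - τ))
      (γ (t₀, s₀ - t₀) • ContinuousLinearMap.fst ℝ ℝ ℝ) (t₀, s₀) := by
    rw [hasFDerivAt_iff_isLittleO_nhds_zero, Asymptotics.isLittleO_iff]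
    intro ε εpos
    have hcont : ContinuousAt γ (t₀, s₀ - t₀) := hγc.continuousAt
    rw [Metric.continuousAt_iff] at hcont
    obtain ⟨δ, δpos, hδ⟩ := hcont ε εpos
    have hball : Metric.ball (0 : ℝ × ℝ) (δ/3) ∈ nhds (0 : ℝ × ℝ) :=
      Metric.ball_mem_nhds _ (by positivity)
    filter_upwards [hball] with h hh
    rw [Metric.mem_ball, dist_zero_right] at hh
    have hh1 : |h.1| ≤ ‖h‖ := norm_fst_le h
    have hh2 : |h.2| ≤ ‖h‖ := norm_snd_le h
    have key : ∀ τ ∈ Set.uIoc t₀ (t₀ + h.1),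
        ‖γ (τ, s₀ + h.2 - τ) - γ (t₀, s₀ - t₀)‖ ≤ ε := by
      intro τ hτ
      rw [Set.mem_uIoc] at hτ
      have htd : |τ - t₀| ≤ |h.1| := by
        rcases hτ with ⟨ha, hb⟩ | ⟨ha, hb⟩ <;> rw [abs_le] <;> constructor <;>
          nlinarith [le_abs_self h.1, neg_abs_le h.1]
      have hdist : dist ((τ, s₀ + h.2 - τ) : ℝ × ℝ) ((t₀, s₀ - t₀) : ℝ × ℝ) < δ := by
        rw [Prod.dist_eq]
        have d1 : dist τ t₀ < δ/3 + δ/3 := by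
          rw [Real.dist_eq]
          calc |τ - t₀| ≤ |h.1| := htd
            _ ≤ ‖h‖ := hh1
            _ < δ/3 := hh
            _ < δ/3 + δ/3 := by linarith
        have d2 : dist (s₀ + h.2 - τ) (s₀ - t₀) < δ/3 + δ/3 := by
          rw [Real.dist_eq]
          calc |s₀ + h.2 - τ - (s₀ - t₀)| = |h.2 - (τ - t₀)| := by ring_nf
            _ ≤ |h.2| + |τ - t₀| := abs_sub _ _
            _ ≤ ‖h‖ + ‖h‖ := add_le_add hh2 (htd.trans hh1)
            _ < δ/3 + δ/3 := by linarith
        calc max (dist τ t₀) (dist (s₀ + h.2 - τ) (s₀ - t₀)) < δ/3 + δ/3 :=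
              max_lt d1 d2
          _ < δ := by linarith
      have := hδ hdist
      rw [Real.dist_eq] at this
      rw [Real.norm_eq_abs]
      exact this.le
    have hint : IntervalIntegrable (fun τ => γ (τ, s₀ + h.2 - τ)) volume t₀ (t₀ + h.1) :=
      (hinner (s₀ + h.2)).intervalIntegrable _ _
    have heq : (∫ τ in t₀..(t₀ + h.1), γ (τ, s₀ + h.2 - τ))
        - γ (t₀, s₀ - t₀) * h.1
        = ∫ τ in t₀..(t₀ + h.1), (γ (τ, s₀ + h.2 - τ) - γ (t₀, s₀ - t₀)) := by
      rw [intervalIntegral.integral_sub hint intervalIntegrable_const,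
        intervalIntegral.integral_const]
      simp [smul_eq_mul]
      ring
    have hbound : ‖∫ τ in t₀..(t₀ + h.1), (γ (τ, s₀ + h.2 - τ) - γ (t₀, s₀ - t₀))‖
        ≤ ε * |t₀ + h.1 - t₀| :=
      intervalIntegral.norm_integral_le_of_norm_le_const key
    have hgoal : ((t₀, s₀) + h : ℝ × ℝ) = ((t₀ + h.1, s₀ + h.2) : ℝ × ℝ) := by
      ext <;> simp
    rw [hgoal]
    simp only [intervalIntegral.integral_same, sub_zero,
      ContinuousLinearMap.coe_smul', ContinuousLinearMap.coe_fst', Pi.smul_apply,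
      smul_eq_mul]
    calc ‖(∫ τ in t₀..(t₀ + h.1), γ (τ, s₀ + h.2 - τ)) - γ (t₀, s₀ - t₀) * h.1‖
        = ‖∫ τ in t₀..(t₀ + h.1), (γ (τ, s₀ + h.2 - τ) - γ (t₀, s₀ - t₀))‖ := by
          rw [heq]
      _ ≤ ε * |t₀ + h.1 - t₀| := hbound
      _ = ε * |h.1| := by ring_nf
      _ ≤ ε * ‖h‖ := mul_le_mul_of_nonneg_left hh1 εpos.le
  exact h1.add h2

/-- The explicit principal amplitude
`a₀(t,r) = χ(r+t) b(r)^{-1/4} exp(-(1/2)∫₀^t γ(τ, r+t-τ) dτ)` solves the transport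
equation `∂ₜa₀ - ∂ᵣa₀ + (γ/2 - b'/(4b)) a₀ = 0`. -/
theorem principal_amplitude_transport
    (χ : ℝ → ℂ) (b : ℝ → ℝ) (γ : ℝ × ℝ → ℝ)
    (hχ : ContDiff ℝ 1 χ) (hb : ContDiff ℝ 1 b) (hbpos : ∀ r, 0 < b r)
    (hγ : ContDiff ℝ 1 γ)
    (a₀ : ℝ × ℝ → ℂ)
    (ha₀ : ∀ t r : ℝ, a₀ (t, r)
      = χ (r + t) * (↑(b r ^ (-(1/4 : ℝ))) : ℂ)
          * Complex.exp (-(1/2 : ℂ) * ↑(∫ τ in (0:ℝ)..t, γ (τ, r + t - τ)))) :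
    Differentiable ℝ a₀ ∧
    ∀ t r : ℝ,
      deriv (fun t' => a₀ (t', r)) t - deriv (fun r' => a₀ (t, r')) r
        + ((↑(γ (t, r)) / 2 - ↑(deriv b r) / (4 * ↑(b r))) : ℂ) * a₀ (t, r) = 0 := by
  have hχd : Differentiable ℝ χ := hχ.differentiable one_ne_zero
  have hbd : Differentiable ℝ b := hb.differentiable one_ne_zero
  set v : ℝ × ℝ → ℝ := fun p => ∫ τ in (0:ℝ)..p.1, γ (τ, p.2 - τ) with hv
  set c : ℝ → ℝ := fun r => b r ^ (-(1/4 : ℝ)) with hcdef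
  -- derivative of c
  have hc : ∀ r : ℝ, HasDerivAt c (-(deriv b r / (4 * b r)) * c r) r := by
    intro r
    have hbr : b r ≠ 0 := (hbpos r).ne'
    have h1 : HasDerivAt (fun x : ℝ => x ^ (-(1/4 : ℝ)))
        ((-(1/4 : ℝ)) * b r ^ ((-(1/4 : ℝ)) - 1)) (b r) :=
      Real.hasDerivAt_rpow_const (Or.inl hbr)
    have h2 : HasDerivAt b (deriv b r) r := (hbd r).hasDerivAt
    have h3 := h1.comp r h2
    refine HasDerivAt.congr_deriv h3 ?_
    have hsub : b r ^ ((-(1/4 : ℝ)) - 1) = b r ^ (-(1/4 : ℝ)) / b r := by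
      rw [Real.rpow_sub (hbpos r), Real.rpow_one]
    rw [hsub, hcdef]
    field_simp
  have hcd : Differentiable ℝ c := fun r => (hc r).differentiableAt
  -- rewrite a₀ globally
  have ha₀' : a₀ = fun p : ℝ × ℝ =>
      χ (p.2 + p.1) * (↑(c p.2) : ℂ)
        * Complex.exp (-(1/2 : ℂ) * ↑(v (p.1, p.2 + p.1))) := by
    funext p
    obtain ⟨t, r⟩ := p
    exact ha₀ t r
  constructor
  · -- differentiability
    rw [ha₀']
    have hvd : Differentiable ℝ v := by
      intro p
      obtain ⟨k, hk⟩ := mgt_v_hasFDerivAt γ hγ p.1 p.2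
      exact hk.differentiableAt
    have h1 : Differentiable ℝ fun p : ℝ × ℝ => χ (p.2 + p.1) :=
      hχd.comp (differentiable_snd.add differentiable_fst)
    have h2 : Differentiable ℝ fun p : ℝ × ℝ => (↑(c p.2) : ℂ) :=
      Complex.ofRealCLM.differentiable.comp (hcd.comp differentiable_snd)
    have h3 : Differentiable ℝ fun p : ℝ × ℝ => v (p.1, p.2 + p.1) :=
      hvd.comp (differentiable_fst.prodMk (differentiable_snd.add differentiable_fst))
    have h4 : Differentiable ℝ fun p : ℝ × ℝ =>
        Complex.exp (-(1/2 : ℂ) * ↑(v (p.1, p.2 + p.1))) :=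
      ((Complex.ofRealCLM.differentiable.comp h3).const_mul _).cexp
    exact (h1.mul h2).mul h4
  · intro t r
    obtain ⟨k, hL⟩ := mgt_v_hasFDerivAt γ hγ t (r + t)
    set q : ℝ := γ (t, r + t - t) with hqdef
    have hq : q = γ (t, r) := by rw [hqdef]; congr 1; ring
    -- derivative of v along t-direction
    have hgt : HasDerivAt (fun t' : ℝ => ((t', r + t') : ℝ × ℝ)) ((1 : ℝ), (1 : ℝ)) t :=
      (hasDerivAt_id t).prodMk ((hasDerivAt_id t).const_add r)
    have hvt : HasDerivAt (fun t' => v (t', r + t')) (q + k) t := by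
      have := hL.comp_hasDerivAt t hgt
      refine HasDerivAt.congr_deriv this ?_
      simp [hqdef]
      ring
    have hgr : HasDerivAt (fun r' : ℝ => ((t, r' + t) : ℝ × ℝ)) ((0 : ℝ), (1 : ℝ)) r :=
      (hasDerivAt_const r t).prodMk ((hasDerivAt_id r).add_const t)
    have hvr : HasDerivAt (fun r' => v (t, r' + t)) k r := by
      have := hL.comp_hasDerivAt r hgr
      refine HasDerivAt.congr_deriv this ?_
      simp
    -- exp factors
    set E : ℂ := Complex.exp (-(1/2 : ℂ) * ↑(v (t, r + t))) with hE
    have hexpt : HasDerivAt (fun t' => Complex.exp (-(1/2 : ℂ) * ↑(v (t', r + t'))))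
        (E * (-(1/2 : ℂ) * ↑(q + k))) t := by
      have := ((hvt.ofReal_comp).const_mul (-(1/2 : ℂ))).cexp
      convert this using 2 <;> simp [hE]
    have hexpr : HasDerivAt (fun r' => Complex.exp (-(1/2 : ℂ) * ↑(v (t, r' + t))))
        (E * (-(1/2 : ℂ) * ↑k)) r := by
      have := ((hvr.ofReal_comp).const_mul (-(1/2 : ℂ))).cexp
      convert this using 2 <;> simp [hE]
    -- χ factors
    have hχt : HasDerivAt (fun t' => χ (r + t')) (deriv χ (r + t)) t :=
      HasDerivAt.comp_const_add r t ((hχd (r + t)).hasDerivAt)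
    have hχr : HasDerivAt (fun r' => χ (r' + t)) (deriv χ (r + t)) r :=
      HasDerivAt.comp_add_const r t ((hχd (r + t)).hasDerivAt)
    -- c factor (complex valued)
    have hcC : HasDerivAt (fun r' => (↑(c r') : ℂ))
        (↑(-(deriv b r / (4 * b r)) * c r)) r := (hc r).ofReal_comp
    -- t-derivative of a₀
    have hDt : HasDerivAt (fun t' => a₀ (t', r))
        (deriv χ (r + t) * (↑(c r) : ℂ) * E
          + χ (r + t) * (↑(c r) : ℂ) * (E * (-(1/2 : ℂ) * ↑(q + k)))) t := by
      have hfun : (fun t' => a₀ (t', r))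
          = fun t' => χ (r + t') * (↑(c r) : ℂ)
              * Complex.exp (-(1/2 : ℂ) * ↑(v (t', r + t'))) := by
        funext t'; exact ha₀ t' r
      rw [hfun]
      exact (hχt.mul_const (↑(c r) : ℂ)).mul hexpt
    -- r-derivative of a₀
    have hDr : HasDerivAt (fun r' => a₀ (t, r'))
        ((deriv χ (r + t) * (↑(c r) : ℂ)
            + χ (r + t) * ↑(-(deriv b r / (4 * b r)) * c r)) * E
          + χ (r + t) * (↑(c r) : ℂ) * (E * (-(1/2 : ℂ) * ↑k))) r := by
      have hfun : (fun r' => a₀ (t, r'))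
          = fun r' => χ (r' + t) * (↑(c r') : ℂ)
              * Complex.exp (-(1/2 : ℂ) * ↑(v (t, r' + t))) := by
        funext r'; exact ha₀ t r'
      rw [hfun]
      exact (hχr.mul hcC).mul hexpr
    rw [hDt.deriv, hDr.deriv, ha₀ t r]
    have hvE : Complex.exp (-(1/2 : ℂ) * ↑(∫ τ in (0:ℝ)..t, γ (τ, r + t - τ))) = E := rfl
    have hcE : (↑(b r ^ (-(1/4 : ℝ))) : ℂ) = (↑(c r) : ℂ) := rfl
    rw [hvE, hcE, ← hq]
    have hbne : (↑(b r) : ℂ) ≠ 0 := by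
      exact_mod_cast (hbpos r).ne'
    push_cast
    field_simp
    ring
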